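/- arXiv:1709.04489 — 4 statements merged into one kernel-verified Lean document; each statement's English description precedes it below -/
import Mathlib

section
/- Let G be a group, k a field of characteristic zero, H a finite-dimensional k-linear representation of G, V ⊆ H a G-submodule of dimension m ≥ 1, and suppose there exists a G-equivariant linear map s : Λ^m H → Λ^m V splitting the inclusion Λ^m V ↪ Λ^m H. Then the inclusion V ↪ H admits a G-equivariant splitting H → V. -/
open Finset in
/-- An alternating map applied to linear combinations given by a matrix picks up a determinant. -/
lemma altMap_map_matrix {R H M : Type*} [CommRing R] [AddCommGroup H] [Module R H]
    [AddCommGroup M] [Module R M] {m : ℕ} (f : H [⋀^Fin m]→ₗ[R] M)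
    (a : Matrix (Fin m) (Fin m) R) (v : Fin m → H) :
    f (fun j => ∑ r, a r j • v r) = a.det • f v := by
  classical
  have h1 : f (fun j => ∑ r, a r j • v r)
      = ∑ σ : Fin m → Fin m, (∏ j, a (σ j) j) • f (v ∘ σ) := by
    have := f.toMultilinearMap.map_sum (g := fun j r => a r j • v r)
    rw [show (f fun j => ∑ r, a r j • v r)
        = f.toMultilinearMap (fun j => ∑ r, a r j • v r) from rfl, this]
    refine Finset.sum_congr rfl fun σ _ => ?_
    exact f.toMultilinearMap.map_smul_univ (fun j => a (σ j) j) (v ∘ σ)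
  have h2 : ∀ σ : Fin m → Fin m, ¬ Function.Bijective σ →
      (∏ j, a (σ j) j) • f (v ∘ σ) = 0 := by
    intro σ hσ
    have hni : ¬ Function.Injective σ := fun h => hσ (Finite.injective_iff_bijective.mp h)
    obtain ⟨i, j, hij, hne⟩ := Function.not_injective_iff.mp hni
    rw [f.map_eq_zero_of_eq (v ∘ σ) (show (v ∘ σ) i = (v ∘ σ) j from congrArg v hij) hne,
      smul_zero]
  have h3 : ∑ σ : Fin m → Fin m, (∏ j, a (σ j) j) • f (v ∘ σ)
      = ∑ σ ∈ Finset.univ.filter (fun σ : Fin m → Fin m => Function.Bijective σ),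
        (∏ j, a (σ j) j) • f (v ∘ σ) := by
    symm
    refine Finset.sum_filter_of_ne fun σ _ h => ?_
    by_contra hb
    exact h (h2 σ hb)
  have h4 : ∑ σ : Equiv.Perm (Fin m), (∏ j, a (σ j) j) • f (v ∘ σ)
      = ∑ σ ∈ Finset.univ.filter (fun σ : Fin m → Fin m => Function.Bijective σ),
        (∏ j, a (σ j) j) • f (v ∘ σ) := by
    refine Finset.sum_bij (fun (σ : Equiv.Perm (Fin m)) _ => (σ : Fin m → Fin m)) ?_ ?_ ?_ ?_
    · intro σ _
      exact Finset.mem_filter.mpr ⟨Finset.mem_univ _, σ.bijective⟩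
    · intro σ _ τ _ h
      exact Equiv.coe_fn_injective h
    · intro τ hτ
      refine ⟨Equiv.ofBijective τ (by simpa using hτ), Finset.mem_univ _, rfl⟩
    · intro σ _
      rfl
  rw [h1, h3, ← h4, Matrix.det_apply, Finset.sum_smul]
  refine Finset.sum_congr rfl fun σ _ => ?_
  rw [f.map_perm v σ]
  rcases Int.units_eq_one_or (Equiv.Perm.sign σ) with h | h <;>
    simp [h, smul_smul, mul_comm]


open Finset in
lemma altMap_map_add_smul {R H M : Type*} [CommRing R] [AddCommGroup H] [Module R H]
    [AddCommGroup M] [Module R M] {m : ℕ} (f : H [⋀^Fin m]→ₗ[R] M)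
    (v : Fin m → H) (c : Fin m → R) (x : H) :
    f (fun j => v j + c j • x) = f v + ∑ i, c i • f (Function.update v i x) := by
  classical
  have h0 : (fun j => v j + c j • x) = (fun j => c j • x) + v := by
    funext j; exact add_comm _ _
  rw [h0, show f ((fun j => c j • x) + v)
      = f.toMultilinearMap ((fun j => c j • x) + v) from rfl,
    f.toMultilinearMap.map_add_univ]
  have hsub : (insert (∅ : Finset (Fin m)) (Finset.univ.image fun i => ({i} : Finset (Fin m))))
      ⊆ Finset.univ := Finset.subset_univ _
  have hzero : ∀ t ∈ (Finset.univ : Finset (Finset (Fin m))),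
      t ∉ (insert (∅ : Finset (Fin m)) (Finset.univ.image fun i => ({i} : Finset (Fin m)))) →
      f.toMultilinearMap (t.piecewise (fun j => c j • x) v) = 0 := by
    intro t _ ht
    simp only [Finset.mem_insert, Finset.mem_image, Finset.mem_univ, true_and, not_or,
      not_exists] at ht
    have h2 : 1 < t.card := by
      rcases Nat.lt_or_ge 1 t.card with h | h
      · exact h
      · interval_cases h' : t.card
        · exact absurd (Finset.card_eq_zero.mp h') ht.1
        · obtain ⟨i, rfl⟩ := Finset.card_eq_one.mp h'
          exact absurd rfl (ht.2 i)
    obtain ⟨i, hi, j, hj, hij⟩ := Finset.one_lt_card.mp h2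
    set w := t.piecewise (fun j => c j • x) v with hw
    have hwi : w i = c i • x := Finset.piecewise_eq_of_mem _ _ _ hi
    have hwj : w j = c j • x := Finset.piecewise_eq_of_mem _ _ _ hj
    have e1 : f w = c i • f (Function.update w i x) := by
      conv_lhs => rw [show w = Function.update w i (c i • x) by rw [← hwi, Function.update_eq_self]]
      exact f.map_update_smul w i (c i) x
    have e2 : f (Function.update w i x)
        = c j • f (Function.update (Function.update w i x) j x) := by
      conv_lhs => rw [show Function.update w i x
        = Function.update (Function.update w i x) j (c j • x) by
          rw [show c j • x = Function.update w i x j by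
            rw [Function.update_of_ne hij.symm, hwj], Function.update_eq_self]]
      exact f.map_update_smul _ j (c j) x
    have e3 : f (Function.update (Function.update w i x) j x) = 0 := by
      refine f.map_eq_zero_of_eq _ (i := i) (j := j) ?_ hij
      rw [Function.update_of_ne hij, Function.update_self, Function.update_self]
    show f w = 0
    rw [e1, e2, e3, smul_zero, smul_zero]
  rw [← Finset.sum_subset hsub hzero, Finset.sum_insert (by simp),
    Finset.sum_image (fun i _ j _ h => Finset.singleton_injective h)]
  have hempty : f.toMultilinearMap ((∅ : Finset (Fin m)).piecewise (fun j => c j • x) v)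
      = f v := by rw [Finset.piecewise_empty]; rfl
  have hsing : ∀ i : Fin m, f.toMultilinearMap (({i} : Finset (Fin m)).piecewise
      (fun j => c j • x) v) = c i • f (Function.update v i x) := by
    intro i
    show f (({i} : Finset (Fin m)).piecewise (fun j => c j • x) v) = _
    rw [Finset.piecewise_singleton]
    exact f.map_update_smul v i (c i) x
  rw [hempty]
  exact congrArg (f v + ·) (Finset.sum_congr rfl fun i _ => hsing i)

open Finset in
lemma altMap_key {R H M : Type*} [CommRing R] [AddCommGroup H] [Module R H]
    [AddCommGroup M] [Module R M] {m : ℕ} (f : H [⋀^Fin m]→ₗ[R] M)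
    (v : Fin m → H) (a : Matrix (Fin m) (Fin m) R) (x : H) (l : Fin m)
    (hA : ∀ (w : Fin m → H) (b : Matrix (Fin m) (Fin m) R),
      f (fun j => ∑ r, b r j • w r) = b.det • f w) :
    ∑ i, a l i • f (Function.update (fun j => ∑ r, a r j • v r) i x)
      = a.det • f (Function.update v l x) := by
  classical
  have hB := altMap_map_add_smul f (fun j => ∑ r, a r j • v r) (fun j => a l j) x
  have heq : (fun j => (∑ r, a r j • v r) + a l j • x)
      = fun j => ∑ r, a r j • (Function.update v l (v l + x)) r := by
    funext j
    have : ∀ r : Fin m, a r j • (Function.update v l (v l + x)) r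
        = a r j • v r + (if r = l then a l j • x else 0) := by
      intro r
      by_cases hr : r = l
      · subst hr; simp [smul_add]
      · simp [Function.update_of_ne hr, hr]
    rw [Finset.sum_congr rfl fun r _ => this r, Finset.sum_add_distrib,
      Finset.sum_ite_eq' Finset.univ l (fun _ => a l j • x)]
    simp
  have hA1 : f (fun j => ∑ r, a r j • (Function.update v l (v l + x)) r)
      = a.det • (f v + f (Function.update v l x)) := by
    rw [hA _ a]
    congr 1
    rw [f.map_update_add v l (v l) x, Function.update_eq_self]
  have hA0 : f (fun j => ∑ r, a r j • v r) = a.det • f v := hA v a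
  rw [heq, hA1, hA0, smul_add] at hB
  exact (add_left_cancel hB.symm)


lemma extAlg_map_ιMulti {R M N : Type*} [CommRing R] [AddCommGroup M] [Module R M]
    [AddCommGroup N] [Module R N] (φ : M →ₗ[R] N) {m : ℕ} (v : Fin m → M) :
    ExteriorAlgebra.map φ (ExteriorAlgebra.ιMulti R m v)
      = ExteriorAlgebra.ιMulti R m (⇑φ ∘ v) := by
  rw [ExteriorAlgebra.ιMulti_apply, ExteriorAlgebra.ιMulti_apply, map_list_prod]
  congr 1
  rw [List.map_ofFn]
  refine congrArg _ (funext fun i => ?_)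
  exact ExteriorAlgebra.map_apply_ι φ (v i)

lemma altMap_map_matrix' {R H M : Type*} [CommRing R] [AddCommGroup H] [Module R H]
    [AddCommGroup M] [Module R M] {m : ℕ} (f : H [⋀^Fin m]→ₗ[R] M)
    (a : Matrix (Fin m) (Fin m) R) (v : Fin m → H) :
    f (fun j => ∑ r, a r j • v r) = a.det • f v := altMap_map_matrix f a v

/-- Every element of the `m`-th exterior power of a space with basis indexed by `Fin m`
is a scalar multiple of the wedge of the basis. -/
lemma exteriorPower_eq_smul_of_basis {k W : Type*} [Field k] [AddCommGroup W] [Module k W]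
    {m : ℕ} (e : Module.Basis (Fin m) k W) {x : ExteriorAlgebra k W} (hx : x ∈ ⋀[k]^m W) :
    ∃ a : k, x = a • ExteriorAlgebra.ιMulti k m ⇑e := by
  classical
  have hle : (⋀[k]^m W : Submodule k (ExteriorAlgebra k W))
      ≤ Submodule.span k {ExteriorAlgebra.ιMulti k m ⇑e} := by
    rw [← ExteriorAlgebra.ιMulti_span_fixedDegree]
    rw [Submodule.span_le]
    rintro _ ⟨v, rfl⟩
    have hv : (fun j => v j) = fun j => ∑ r, (e.repr (v j) r) • e r := by
      funext j
      exact (e.sum_repr (v j)).symm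
    have := altMap_map_matrix' (ExteriorAlgebra.ιMulti k m (M := W))
      (Matrix.of fun r j => e.repr (v j) r) ⇑e
    rw [show ExteriorAlgebra.ιMulti k m v = ExteriorAlgebra.ιMulti k m (fun j => v j) from rfl,
      hv]
    rw [show (fun j => ∑ r, (e.repr (v j) r) • e r)
      = fun j => ∑ r, (Matrix.of fun r j => e.repr (v j) r) r j • e r from rfl, this]
    exact Submodule.smul_mem _ _ (Submodule.mem_span_singleton_self _)
  obtain ⟨a, ha⟩ := Submodule.mem_span_singleton.mp (hle hx)
  exact ⟨a, ha.symm⟩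

/-- The image of `Λ^m V` inside `Λ^m H` (viewed inside the exterior algebra of `H`). -/
noncomputable def exteriorPowerLine {k H : Type*} [Field k] [AddCommGroup H] [Module k H]
    (m : ℕ) (V : Submodule k H) : Submodule k (ExteriorAlgebra k H) :=
  Submodule.map (ExteriorAlgebra.map V.subtype).toLinearMap (⋀[k]^m V)

open ExteriorAlgebra in
lemma exteriorAlgebra_map_mem_exteriorPower {k H : Type*} [Field k] [AddCommGroup H]
    [Module k H] (f : H →ₗ[k] H) (m : ℕ) {x} (hx : x ∈ ⋀[k]^m H) :
    ExteriorAlgebra.map f x ∈ ⋀[k]^m H := by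
  have h : Submodule.map (ExteriorAlgebra.map f).toLinearMap
      ((LinearMap.range (ι k : H →ₗ[k] ExteriorAlgebra k H)) ^ m) ≤
      (LinearMap.range (ι k : H →ₗ[k] ExteriorAlgebra k H)) ^ m := by
    rw [Submodule.map_pow]
    gcongr
    rintro y ⟨z, ⟨w, rfl⟩, rfl⟩
    exact ⟨f w, (map_apply_ι f w).symm⟩
  exact h ⟨x, hx, rfl⟩

/-- The endomorphism `Λ^m f` of `Λ^m H` induced by `f : H → H`. -/
noncomputable def exteriorPowerMap {k H : Type*} [Field k] [AddCommGroup H] [Module k H]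
    (f : H →ₗ[k] H) (m : ℕ) : (⋀[k]^m H) →ₗ[k] (⋀[k]^m H) :=
  (ExteriorAlgebra.map f).toLinearMap.restrict
    (fun _ hx => exteriorAlgebra_map_mem_exteriorPower f m hx)

/-- If `V ⊆ H` is an `m`-dimensional (`m ≥ 1`) `G`-submodule of a finite-dimensional
representation of `G` over a field of characteristic zero, and there is a `G`-equivariant
linear splitting `s : Λ^m H → Λ^m V` of the inclusion `Λ^m V ↪ Λ^m H`, then the
inclusion `V ↪ H` admits a `G`-equivariant splitting `H → V`. -/
theorem equivariant_splitting_of_exterior_splitting {k G H : Type*} [Field k] [CharZero k]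
    [Group G] [AddCommGroup H] [Module k H] [FiniteDimensional k H]
    (ρ : Representation k G H) (V : Submodule k H)
    (hV : ∀ g : G, ∀ v ∈ V, ρ g v ∈ V) (m : ℕ) (hm : 1 ≤ m)
    (hdim : Module.finrank k V = m)
    (s : (⋀[k]^m H) →ₗ[k] (⋀[k]^m H))
    (hrange : ∀ x : ⋀[k]^m H, (s x : ExteriorAlgebra k H) ∈ exteriorPowerLine m V)
    (hsplit : ∀ x : ⋀[k]^m H, (x : ExteriorAlgebra k H) ∈ exteriorPowerLine m V → s x = x)
    (hequiv : ∀ (g : G) (x : ⋀[k]^m H),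
      s (exteriorPowerMap (ρ g) m x) = exteriorPowerMap (ρ g) m (s x)) :
    ∃ π : H →ₗ[k] H, LinearMap.range π = V ∧ (∀ v ∈ V, π v = v) ∧
      ∀ (g : G) (h : H), π (ρ g h) = ρ g (π h) := by
  classical
  obtain ⟨Q, hQ⟩ := Submodule.exists_isCompl V
  set p : H →ₗ[k] V := Submodule.linearProjOfIsCompl V Q hQ with hp
  set e : Module.Basis (Fin m) k V := Module.finBasisOfFinrankEq k V hdim with he
  set eH : Fin m → H := fun i => ((e i : V) : H) with heH
  set D : H [⋀^Fin m]→ₗ[k] k := (e.det).compLinearMap p with hD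
  set fam : ∀ i : ℕ, H [⋀^Fin i]→ₗ[k] k :=
    Function.update (fun i => (0 : H [⋀^Fin i]→ₗ[k] k)) m D with hfam
  set f0 : ExteriorAlgebra k H →ₗ[k] k := ExteriorAlgebra.liftAlternating fam with hf0def
  have hf0 : ∀ v : Fin m → H, f0 (ExteriorAlgebra.ιMulti k m v) = e.det (fun i => p (v i)) := by
    intro v
    rw [hf0def, ExteriorAlgebra.liftAlternating_apply_ιMulti, hfam, Function.update_self]
    rfl
  set FF : H [⋀^Fin m]→ₗ[k] (⋀[k]^m H) :=
    (ExteriorAlgebra.ιMulti k m).codRestrict (⋀[k]^m H)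
      (fun v => ExteriorAlgebra.ιMulti_range k m (Set.mem_range_self v)) with hFF
  set ω : (⋀[k]^m H) := FF eH with hω
  have hωcoe : (ω : ExteriorAlgebra k H) = ExteriorAlgebra.ιMulti k m eH := rfl
  have hpeH : ∀ i, p (eH i) = e i := fun i =>
    Submodule.linearProjOfIsCompl_apply_left hQ (e i)
  have hf0ω : f0 (ExteriorAlgebra.ιMulti k m eH) = 1 := by
    rw [hf0]
    have : (fun i => p (eH i)) = ⇑e := funext fun i => hpeH i
    rw [this, e.det_self]
  have hmemline : ∀ v : Fin m → V,
      (ExteriorAlgebra.ιMulti k m (fun i => ((v i : V) : H))) ∈ exteriorPowerLine m V := by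
    intro v
    refine ⟨ExteriorAlgebra.ιMulti k m v,
      ExteriorAlgebra.ιMulti_range k m (Set.mem_range_self v), ?_⟩
    show ExteriorAlgebra.map V.subtype (ExteriorAlgebra.ιMulti k m v) = _
    rw [extAlg_map_ιMulti]
    rfl
  have hωline : (ω : ExteriorAlgebra k H) ∈ exteriorPowerLine m V := hmemline ⇑e
  have hline : ∀ y ∈ exteriorPowerLine m V, y = f0 y • (ω : ExteriorAlgebra k H) := by
    rintro y ⟨z, hz, rfl⟩
    obtain ⟨a, rfl⟩ := exteriorPower_eq_smul_of_basis e hz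
    have h1 : (ExteriorAlgebra.map V.subtype).toLinearMap
        (a • ExteriorAlgebra.ιMulti k m ⇑e)
        = a • ExteriorAlgebra.ιMulti k m eH := by
      rw [map_smul]
      congr 1
      show ExteriorAlgebra.map V.subtype (ExteriorAlgebra.ιMulti k m ⇑e) = _
      rw [extAlg_map_ιMulti]
      rfl
    rw [h1, map_smul, smul_eq_mul, hωcoe, hf0ω, mul_one]
  -- the coefficient functional
  set c0 : (⋀[k]^m H) →ₗ[k] k := f0 ∘ₗ (Submodule.subtype _) ∘ₗ s with hc0
  have hK1 : ∀ x : ⋀[k]^m H, (s x : ExteriorAlgebra k H) = c0 x • (ω : ExteriorAlgebra k H) :=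
    fun x => hline _ (hrange x)
  have hc0ω : c0 ω = 1 := by
    have h1 := hsplit ω hωline
    rw [hc0]
    show f0 ((s ω : ExteriorAlgebra k H)) = 1
    rw [h1, hωcoe, hf0ω]
  set Fc : H [⋀^Fin m]→ₗ[k] k := c0.compAlternatingMap FF with hFc
  have hFceH : Fc eH = 1 := by
    rw [hFc]
    show c0 (FF eH) = 1
    rw [← hω, hc0ω]
  -- the projection
  set π : H →ₗ[k] H :=
    { toFun := fun h => ∑ i, Fc (Function.update eH i h) • eH i
      map_add' := by
        intro h1 h2
        rw [← Finset.sum_add_distrib]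
        refine Finset.sum_congr rfl fun i _ => ?_
        rw [Fc.map_update_add eH i h1 h2, add_smul]
      map_smul' := by
        intro a h
        show (∑ i, Fc (Function.update eH i (a • h)) • eH i)
          = (RingHom.id k) a • ∑ i, Fc (Function.update eH i h) • eH i
        rw [RingHom.id_apply, Finset.smul_sum]
        exact Finset.sum_congr rfl fun i _ => by
          rw [Fc.map_update_smul eH i a h, smul_smul, smul_eq_mul] } with hπ
  have hπapp : ∀ h : H, π h = ∑ i, Fc (Function.update eH i h) • eH i := fun h => rfl
  have hπmem : ∀ h : H, π h ∈ V := by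
    intro h
    rw [hπapp]
    exact Submodule.sum_mem _ fun i _ => Submodule.smul_mem _ _ (SetLike.coe_mem (e i))
  have hπeH : ∀ j, π (eH j) = eH j := by
    intro j
    rw [hπapp, Finset.sum_eq_single j]
    · rw [Function.update_eq_self, hFceH, one_smul]
    · intro i _ hij
      rw [Fc.map_eq_zero_of_eq (Function.update eH i (eH j))
        (show Function.update eH i (eH j) i = Function.update eH i (eH j) j by
          rw [Function.update_self, Function.update_of_ne hij.symm]) hij, zero_smul]
    · intro hj
      exact absurd (Finset.mem_univ j) hj
  have hπV : ∀ v ∈ V, π v = v := by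
    intro v hv
    have hrep : v = ∑ i, e.repr ⟨v, hv⟩ i • eH i := by
      have h1 := e.sum_repr ⟨v, hv⟩
      have h2 := congrArg (V.subtype) h1
      rw [map_sum] at h2
      simpa using h2.symm
    rw [hrep, map_sum]
    refine Finset.sum_congr rfl fun i _ => ?_
    rw [map_smul, hπeH]
  refine ⟨π, ?_, hπV, ?_⟩
  · refine le_antisymm ?_ ?_
    · rintro x ⟨h, rfl⟩
      exact hπmem h
    · intro v hv
      exact ⟨v, hπV v hv⟩
  -- equivariance
  intro g h
  set rg : V →ₗ[k] V := (ρ g).restrict (fun x hx => hV g x hx) with hrg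
  set a : Matrix (Fin m) (Fin m) k := LinearMap.toMatrix e e rg with ha
  have hF1 : ∀ j, ρ g (eH j) = ∑ r, a r j • eH r := by
    intro j
    have h1 : rg (e j) = ∑ r, a r j • e r := by
      have h2 : (fun r => a r j • e r) = fun r => (e.repr (rg (e j)) r) • e r := by
        funext r
        rw [ha, LinearMap.toMatrix_apply]
      rw [h2]
      exact (e.sum_repr _).symm
    have h3 : ρ g (eH j) = ((rg (e j) : V) : H) :=
      (LinearMap.restrict_coe_apply _ _ _).symm
    rw [h3, h1]
    push_cast
    rfl
  have hdet : a.det ≠ 0 := by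
    set rg' : V →ₗ[k] V := (ρ g⁻¹).restrict (fun x hx => hV g⁻¹ x hx) with hrg'
    have hcomp : rg ∘ₗ rg' = LinearMap.id := by
      ext v
      show ρ g (ρ g⁻¹ (v : H)) = (v : H)
      rw [← Module.End.mul_apply, ← map_mul, mul_inv_cancel, map_one, Module.End.one_apply]
    have hdet1 : LinearMap.det rg * LinearMap.det rg' = 1 := by
      rw [← LinearMap.det_comp, hcomp, LinearMap.det_id]
    have : a.det = LinearMap.det rg := LinearMap.det_toMatrix e rg
    rw [this]
    exact left_ne_zero_of_mul_eq_one hdet1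
  have hmapω : ExteriorAlgebra.map (ρ g) (ExteriorAlgebra.ιMulti k m eH)
      = a.det • ExteriorAlgebra.ιMulti k m eH := by
    rw [extAlg_map_ιMulti]
    have h1 : (⇑(ρ g) ∘ eH) = fun j => ∑ r, a r j • eH r := funext hF1
    rw [h1]
    exact altMap_map_matrix (ExteriorAlgebra.ιMulti k m) a eH
  have hF2 : ∀ x : ⋀[k]^m H, c0 (exteriorPowerMap (ρ g) m x) = a.det * c0 x := by
    intro x
    have h1 : c0 (exteriorPowerMap (ρ g) m x)
        = f0 ((s (exteriorPowerMap (ρ g) m x) : ExteriorAlgebra k H)) := rfl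
    rw [h1, hequiv g x]
    have h2 : ((exteriorPowerMap (ρ g) m (s x) : ⋀[k]^m H) : ExteriorAlgebra k H)
        = ExteriorAlgebra.map (ρ g) (s x : ExteriorAlgebra k H) :=
      LinearMap.restrict_coe_apply _ _ _
    rw [h2, hK1 x, map_smul, map_smul, hωcoe, hmapω]
    simp only [map_smul, smul_eq_mul, hf0ω]
    ring
  have hTgFF : ∀ u : Fin m → H,
      exteriorPowerMap (ρ g) m (FF u) = FF (⇑(ρ g) ∘ u) := by
    intro u
    refine Subtype.ext ?_
    have h1 : ((exteriorPowerMap (ρ g) m (FF u) : ⋀[k]^m H) : ExteriorAlgebra k H)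
        = ExteriorAlgebra.map (ρ g) ((FF u : ⋀[k]^m H) : ExteriorAlgebra k H) :=
      LinearMap.restrict_coe_apply _ _ _
    rw [h1]
    show ExteriorAlgebra.map (ρ g) (ExteriorAlgebra.ιMulti k m u)
      = ExteriorAlgebra.ιMulti k m (⇑(ρ g) ∘ u)
    exact extAlg_map_ιMulti _ u
  have hcoeff : ∀ r : Fin m, Fc (Function.update eH r (ρ g h))
      = ∑ i, a r i * Fc (Function.update eH i h) := by
    intro r
    have hD := altMap_key Fc eH a (ρ g h) r (fun w b => altMap_map_matrix Fc b w)
    have hw : ∀ i : Fin m, Function.update (fun j => ∑ t, a t j • eH t) i (ρ g h)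
        = ⇑(ρ g) ∘ Function.update eH i h := by
      intro i
      funext j
      by_cases hji : j = i
      · subst hji
        simp only [Function.update_self, Function.comp_apply]
      · simp only [Function.update_of_ne hji, Function.comp_apply, hF1 j]
    have hterm : ∀ i : Fin m,
        Fc (Function.update (fun j => ∑ t, a t j • eH t) i (ρ g h))
        = a.det * Fc (Function.update eH i h) := by
      intro i
      rw [hw i]
      have h1 : Fc (⇑(ρ g) ∘ Function.update eH i h)
          = c0 (FF (⇑(ρ g) ∘ Function.update eH i h)) := rfl
      rw [h1, ← hTgFF, hF2]
      rfl
    rw [Finset.sum_congr rfl (fun i _ => by rw [hterm i])] at hD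
    refine mul_left_cancel₀ hdet ?_
    simp only [smul_eq_mul] at hD
    rw [← hD, Finset.mul_sum]
    exact Finset.sum_congr rfl fun i _ => by ring
  -- conclude
  rw [hπapp, hπapp, map_sum]
  have hrhs : ∀ i : Fin m, ρ g (Fc (Function.update eH i h) • eH i)
      = ∑ r, (a r i * Fc (Function.update eH i h)) • eH r := by
    intro i
    rw [map_smul, hF1 i, Finset.smul_sum]
    refine Finset.sum_congr rfl fun r _ => ?_
    rw [smul_smul, mul_comm]
  rw [Finset.sum_congr rfl (fun i _ => hrhs i), Finset.sum_comm]
  refine Finset.sum_congr rfl fun r _ => ?_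
  rw [hcoeff r, Finset.sum_smul]
end

section
/- Let G be a group, N ≤ G a subgroup of finite index, and ρ a finite-dimensional representation of G over a field of characteristic zero. If the restriction of ρ to N is semisimple, then ρ is semisimple. -/
/-- A subspace `W` is a subrepresentation for `ρ` if it is stable under every `ρ g`. -/
def IsSubrep {k G V : Type*} [Field k] [Monoid G] [AddCommGroup V] [Module k V]
    (ρ : Representation k G V) (W : Submodule k V) : Prop :=
  ∀ g : G, ∀ v ∈ W, ρ g v ∈ W

/-- A representation is semisimple iff every subrepresentation admits a complementary
subrepresentation. -/
def IsSemisimpleRep {k G V : Type*} [Field k] [Monoid G] [AddCommGroup V] [Module k V]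
    (ρ : Representation k G V) : Prop :=
  ∀ W : Submodule k V, IsSubrep ρ W →
    ∃ W' : Submodule k V, IsSubrep ρ W' ∧ IsCompl W W'

/-- If the restriction of a finite-dimensional representation in characteristic zero
to a finite-index subgroup is semisimple, then the representation itself is semisimple. -/
theorem semisimple_of_restriction_finiteIndex {k G V : Type*} [Field k] [CharZero k]
    [Group G] [AddCommGroup V] [Module k V] [FiniteDimensional k V]
    (ρ : Representation k G V) (N : Subgroup G) [N.FiniteIndex]
    (h : IsSemisimpleRep (ρ.comp N.subtype)) : IsSemisimpleRep ρ := by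
  intro W hW
  obtain ⟨W', hW', hc⟩ := h W (fun n v hv => hW n v hv)
  have hcancel : ∀ (g : G) (v : V), ρ g⁻¹ (ρ g v) = v := fun g v => by
    rw [← Module.End.mul_apply, ← map_mul, inv_mul_cancel, map_one, Module.End.one_apply]
  have hcancel2 : ∀ (g : G) (v : V), ρ g (ρ g⁻¹ v) = v := fun g v => by
    rw [← Module.End.mul_apply, ← map_mul, mul_inv_cancel, map_one, Module.End.one_apply]
  -- the N-equivariant projection onto W
  set e : V →ₗ[k] V := W.subtype ∘ₗ (W.projectionOnto W' hc) with he_def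
  have he_mem : ∀ v, e v ∈ W := fun v => (W.projectionOnto W' hc v).2
  have he_left : ∀ v ∈ W, e v = v := by
    intro v hv
    have := Submodule.projectionOnto_apply_left hc ⟨v, hv⟩
    simpa [he_def] using congrArg (Submodule.subtype W) this
  have he_right : ∀ v ∈ W', e v = 0 := by
    intro v hv
    have := Submodule.projectionOnto_apply_right hc ⟨v, hv⟩
    simpa [he_def] using congrArg (Submodule.subtype W) this
  have heN : ∀ n : N, ∀ v, e (ρ (n : G) v) = ρ (n : G) (e v) := by
    intro n v
    obtain ⟨w, w', hw, hw', rfl⟩ := Submodule.codisjoint_iff_exists_add_eq.mp hc.codisjoint v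
    have h1 : ρ (n : G) w ∈ W := hW _ _ hw
    have h2 : ρ (n : G) w' ∈ W' := hW' n _ hw'
    simp only [map_add, he_left _ h1, he_right _ h2, he_left _ hw, he_right _ hw', add_zero]
  have key : ∀ (n : N) (w : V), ρ (n : G) (e (ρ ((n : G))⁻¹ w)) = e w := by
    intro n w
    rw [← heN, hcancel2]
  haveI : Fintype (G ⧸ N) := Fintype.ofFinite _
  have wd : ∀ a b : G, (QuotientGroup.leftRel N).r a b →
      ρ a ∘ₗ e ∘ₗ ρ a⁻¹ = ρ b ∘ₗ e ∘ₗ ρ b⁻¹ := by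
    intro a b hab
    rw [QuotientGroup.leftRel_apply] at hab
    obtain ⟨n, rfl⟩ : ∃ n : N, b = a * n := ⟨⟨a⁻¹ * b, hab⟩, by simp⟩
    ext v
    simp only [LinearMap.comp_apply, mul_inv_rev, map_mul, Module.End.mul_apply]
    congr 1
    exact (key n _).symm
  let f : G ⧸ N → (V →ₗ[k] V) := Quotient.lift (fun g => ρ g ∘ₗ e ∘ₗ ρ g⁻¹) wd
  have f_mk : ∀ g : G, f (QuotientGroup.mk g) = ρ g ∘ₗ e ∘ₗ ρ g⁻¹ := fun g => rfl
  set p : V →ₗ[k] V := (N.index : k)⁻¹ • ∑ c : G ⧸ N, f c with hp_def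
  have hcard : (Fintype.card (G ⧸ N)) = N.index := by
    rw [Subgroup.index, Nat.card_eq_fintype_card]
  have hind : (N.index : k) ≠ 0 := by
    exact_mod_cast Nat.cast_ne_zero.mpr Subgroup.FiniteIndex.index_ne_zero
  have hp_mem : ∀ v, p v ∈ W := by
    intro v
    rw [hp_def]
    simp only [LinearMap.smul_apply, LinearMap.sum_apply]
    refine Submodule.smul_mem _ _ (Submodule.sum_mem _ fun c _ => ?_)
    induction c using QuotientGroup.induction_on with
    | H g =>
      rw [f_mk]
      exact hW g _ (he_mem _)
  have hp_id : ∀ v ∈ W, p v = v := by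
    intro v hv
    rw [hp_def]
    simp only [LinearMap.smul_apply, LinearMap.sum_apply]
    have : ∀ c : G ⧸ N, f c v = v := by
      intro c
      induction c using QuotientGroup.induction_on with
      | H g =>
        rw [f_mk]
        simp only [LinearMap.comp_apply]
        rw [he_left _ (hW g⁻¹ _ hv), hcancel2]
    rw [Finset.sum_congr rfl (fun c _ => this c), Finset.sum_const, Finset.card_univ, hcard,
      ← Nat.cast_smul_eq_nsmul k, inv_smul_smul₀ hind]
  have hfh : ∀ (g : G) (c : G ⧸ N) (v : V), f (g • c) (ρ g v) = ρ g (f c v) := by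
    intro g c v
    induction c using QuotientGroup.induction_on with
    | H a =>
      have hgc : g • (QuotientGroup.mk a : G ⧸ N) = QuotientGroup.mk (g * a) := rfl
      rw [hgc, f_mk, f_mk]
      simp only [LinearMap.comp_apply, mul_inv_rev, map_mul, Module.End.mul_apply]
      rw [hcancel g v]
  have hpG : ∀ (g : G) (v : V), p (ρ g v) = ρ g (p v) := by
    intro g v
    rw [hp_def]
    simp only [LinearMap.smul_apply, LinearMap.sum_apply, map_smul]
    congr 1
    rw [map_sum]
    exact Fintype.sum_bijective (g⁻¹ • ·) (MulAction.bijective g⁻¹) _ _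
      (fun c => by rw [← hfh g (g⁻¹ • c) v, smul_inv_smul])
  refine ⟨LinearMap.ker p, ?_, ?_, ?_⟩
  · intro g v hv
    rw [LinearMap.mem_ker] at hv ⊢
    rw [hpG, hv, map_zero]
  · rw [Submodule.disjoint_def]
    intro v hvW hvK
    rw [LinearMap.mem_ker] at hvK
    rw [← hp_id v hvW, hvK]
  · rw [codisjoint_iff, eq_top_iff]
    intro v _
    have h1 : p v ∈ W := hp_mem v
    have h2 : v - p v ∈ LinearMap.ker p := by
      rw [LinearMap.mem_ker, map_sub, hp_id _ h1, sub_self]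
    have hv : v = p v + (v - p v) := by abel
    rw [hv]
    exact Submodule.add_mem_sup h1 h2
end

section
/- Let G be a group, H ≤ G a subgroup of finite index, and W a finite-dimensional representation of H over a field of characteristic zero. If the induced representation Ind_H^G W is semisimple as a G-representation, then W is semisimple as an H-representation. -/
open scoped Classical

/-- The underlying space of the representation of `G` induced from a representation
`ρ : H → GL(W)` of a subgroup `H ≤ G`: functions `f : G → W` satisfying
`f (h * g) = ρ h (f g)` for all `h ∈ H`, `g ∈ G`. -/
def inducedCarrier {k G W : Type*} [Field k] [Group G] [AddCommGroup W] [Module k W]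
    (H : Subgroup G) (ρ : Representation k H W) : Submodule k (G → W) where
  carrier := {f | ∀ (h : H) (g : G), f (↑h * g) = ρ h (f g)}
  add_mem' ha hb h g := by simp [ha h g, hb h g]
  zero_mem' h g := by simp
  smul_mem' c f hf h g := by simp [hf h g]

/-- The representation of `G` induced from a representation of a subgroup `H ≤ G`,
given by right translation on the space `inducedCarrier H ρ`. -/
def inducedRep {k G W : Type*} [Field k] [Group G] [AddCommGroup W] [Module k W]
    (H : Subgroup G) (ρ : Representation k H W) :
    Representation k G (inducedCarrier H ρ) where
  toFun g :=
    { toFun := fun f => ⟨fun x => (f : G → W) (x * g),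
        fun h x => by simpa [mul_assoc] using f.2 h (x * g)⟩
      map_add' := fun a b => rfl
      map_smul' := fun c a => rfl }
  map_one' := by ext f x; simp
  map_mul' g₁ g₂ := by ext f x; simp [mul_assoc]

/-- Extension by zero, an `H`-equivariant section of evaluation at `1`. -/
noncomputable def extendByZero {k G W : Type*} [Field k] [Group G] [AddCommGroup W] [Module k W]
    (H : Subgroup G) (ρ : Representation k H W) : W →ₗ[k] inducedCarrier H ρ where
  toFun w := ⟨fun g => if hg : g ∈ H then ρ ⟨g, hg⟩ w else 0, by
    intro h g
    by_cases hg : g ∈ H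
    · have hmem : (↑h * g) ∈ H := mul_mem h.2 hg
      simp only [dif_pos hg, dif_pos hmem]
      have : (⟨↑h * g, hmem⟩ : H) = h * ⟨g, hg⟩ := rfl
      rw [this, map_mul]; rfl
    · have hn : ¬ ((↑h : G) * g ∈ H) := fun hh => hg (by
        simpa using mul_mem (inv_mem h.2) hh)
      simp [dif_neg hg, dif_neg hn]⟩
  map_add' a b := by ext g; by_cases hg : g ∈ H <;> simp [hg]
  map_smul' c a := by ext g; by_cases hg : g ∈ H <;> simp [hg]

/-- Evaluation at `1`, an `H`-equivariant linear map from the induced module to `W`. -/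
def evalOne {k G W : Type*} [Field k] [Group G] [AddCommGroup W] [Module k W]
    (H : Subgroup G) (ρ : Representation k H W) : inducedCarrier H ρ →ₗ[k] W where
  toFun f := f.1 1
  map_add' _ _ := rfl
  map_smul' _ _ := rfl

theorem extendByZero_equivariant {k G W : Type*} [Field k] [Group G] [AddCommGroup W]
    [Module k W] (H : Subgroup G) (ρ : Representation k H W) (h : H) (w : W) :
    extendByZero H ρ (ρ h w) = inducedRep H ρ h (extendByZero H ρ w) := by
  apply Subtype.ext
  funext g
  show _ = (extendByZero H ρ w).1 (g * h)
  by_cases hg : g ∈ H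
  · have hmem : g * (h : G) ∈ H := mul_mem hg h.2
    show (if hg : g ∈ H then ρ ⟨g, hg⟩ (ρ h w) else 0) =
      (if hm : g * (h : G) ∈ H then ρ ⟨g * h, hm⟩ w else 0)
    rw [dif_pos hg, dif_pos hmem]
    have : (⟨g * (h : G), hmem⟩ : H) = ⟨g, hg⟩ * h := rfl
    rw [this, map_mul]; rfl
  · have hn : ¬ (g * (h : G) ∈ H) := fun hh => hg (by
      simpa using mul_mem hh (inv_mem h.2))
    show (if hg : g ∈ H then ρ ⟨g, hg⟩ (ρ h w) else 0) =
      (if hm : g * (h : G) ∈ H then ρ ⟨g * h, hm⟩ w else 0)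
    rw [dif_neg hg, dif_neg hn]

/-- Functions in the induced module with values in a given submodule `U`. -/
def valuedIn {k G W : Type*} [Field k] [Group G] [AddCommGroup W] [Module k W]
    (H : Subgroup G) (ρ : Representation k H W) (U : Submodule k W) :
    Submodule k (inducedCarrier H ρ) where
  carrier := {f | ∀ g : G, (f : G → W) g ∈ U}
  add_mem' ha hb g := U.add_mem (ha g) (hb g)
  zero_mem' g := U.zero_mem
  smul_mem' c f hf g := U.smul_mem c (hf g)

set_option synthInstance.maxHeartbeats 1000000 in
set_option maxHeartbeats 1000000 in
/-- If `H ≤ G` has finite index and `W` is a finite-dimensional representation of `H`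
over a field of characteristic zero such that `Ind_H^G W` is semisimple as a
`G`-representation, then `W` is semisimple as an `H`-representation. -/
theorem semisimple_of_induced_semisimple {k G W : Type*} [Field k] [CharZero k] [Group G]
    [AddCommGroup W] [Module k W] [FiniteDimensional k W]
    (H : Subgroup G) [H.FiniteIndex] (ρ : Representation k H W)
    (h : IsSemisimpleRep (inducedRep H ρ)) : IsSemisimpleRep ρ := by
  intro U hU
  -- the subrepresentation of functions with values in U
  set Ut : Submodule k (inducedCarrier H ρ) := valuedIn H ρ U with hUtdef
  have hUt : IsSubrep (inducedRep H ρ) Ut := fun g f hf x => hf (x * g)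
  obtain ⟨C, hC, hcompl⟩ := h Ut hUt
  let π := Ut.projectionOnto C hcompl
  have hπeq : ∀ (h₀ : H) (f : inducedCarrier H ρ),
      (π (inducedRep H ρ h₀ f) : inducedCarrier H ρ) = inducedRep H ρ h₀ (π f) := by
    intro h₀ f
    have hmemC : f - (π f : inducedCarrier H ρ) ∈ C := by
      rw [← Submodule.linearProjOfIsCompl_apply_eq_zero_iff hcompl, map_sub,
        Submodule.linearProjOfIsCompl_apply_left hcompl (π f)]; exact sub_self _
    have : inducedRep H ρ h₀ f =
        inducedRep H ρ h₀ (π f : inducedCarrier H ρ) +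
        inducedRep H ρ h₀ (f - π f) := by
      rw [← map_add]; exact congrArg _ (by abel)
    rw [this, map_add,
      Submodule.projectionOnto_apply_of_mem_right hcompl (hC _ _ hmemC),
      Submodule.linearProjOfIsCompl_apply_left hcompl
        ⟨inducedRep H ρ h₀ (π f : inducedCarrier H ρ), hUt h₀ _ (π f).2⟩]
    simp
  -- the H-equivariant projection of W onto U
  let p : W →ₗ[k] W :=
    (evalOne H ρ) ∘ₗ Ut.subtype ∘ₗ π ∘ₗ extendByZero H ρ
  have hrange : ∀ w : W, p w ∈ U := fun w => (π (extendByZero H ρ w)).2 1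
  have hid : ∀ w ∈ U, p w = w := by
    intro w hw
    have hmem : extendByZero H ρ w ∈ Ut := by
      intro g
      show (if hg : g ∈ H then ρ ⟨g, hg⟩ w else 0) ∈ U
      by_cases hg : g ∈ H
      · rw [dif_pos hg]; exact hU _ _ hw
      · rw [dif_neg hg]; exact U.zero_mem
    show evalOne H ρ (π (extendByZero H ρ w) : inducedCarrier H ρ) = w
    rw [show π (extendByZero H ρ w) = ⟨extendByZero H ρ w, hmem⟩ from
      Submodule.linearProjOfIsCompl_apply_left hcompl ⟨extendByZero H ρ w, hmem⟩]
    show (extendByZero H ρ w).1 1 = w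
    show (if hg : (1 : G) ∈ H then ρ ⟨1, hg⟩ w else 0) = w
    rw [dif_pos (one_mem H)]
    have : (⟨(1 : G), one_mem H⟩ : H) = 1 := rfl
    rw [this, map_one]; rfl
  have hequiv : ∀ (h₀ : H) (w : W), p (ρ h₀ w) = ρ h₀ (p w) := by
    intro h₀ w
    show evalOne H ρ (π (extendByZero H ρ (ρ h₀ w)) : inducedCarrier H ρ) = _
    rw [extendByZero_equivariant, hπeq]
    show ((π (extendByZero H ρ w) : inducedCarrier H ρ) : G → W) (1 * h₀) = _
    rw [show (1 : G) * (h₀ : G) = (h₀ : G) * 1 by group]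
    exact (π (extendByZero H ρ w) : inducedCarrier H ρ).2 h₀ 1
  refine ⟨LinearMap.ker p, fun h₀ v hv => ?_, ?_, ?_⟩
  · show p (ρ h₀ v) = 0
    rw [hequiv]
    rw [LinearMap.mem_ker.mp hv]
    simp
  · rw [Submodule.disjoint_def]
    intro x hxU hxK
    have := hid x hxU
    rw [LinearMap.mem_ker.mp hxK] at this
    exact this.symm
  · rw [codisjoint_iff, eq_top_iff]
    intro x _
    have h1 : p x ∈ U := hrange x
    have h2 : x - p x ∈ LinearMap.ker p := by
      rw [LinearMap.mem_ker, map_sub, hid _ h1, sub_self]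
    have : x = p x + (x - p x) := by abel
    rw [this]
    exact Submodule.add_mem_sup h1 h2
end

section
/- Let G be a group and V a finite-dimensional representation of G over a field k. If the restriction of V to a finite-index subgroup N ≤ G is semisimple and char k = 0, then V is semisimple; conversely, if V is semisimple then its restriction to any finite-index normal subgroup N is semisimple (Clifford's theorem direction). -/
section Helpers
variable {k G V : Type*} [Field k] [Group G] [AddCommGroup V] [Module k V]

lemma rep_inv_cancel (ρ : Representation k G V) (g : G) (v : V) : ρ g (ρ g⁻¹ v) = v := by
  have h : ρ g * ρ g⁻¹ = 1 := by rw [← map_mul, mul_inv_cancel, map_one]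
  simpa [Module.End.mul_apply] using LinearMap.congr_fun h v

lemma rep_comp_inv (ρ : Representation k G V) (g : G) : (ρ g) ∘ₗ (ρ g⁻¹) = LinearMap.id := by
  ext v; simpa using rep_inv_cancel ρ g v

section Avg
variable (ρ : Representation k G V) {N : Subgroup G}

/-- conjugate of π by g -/
noncomputable def conjProj (π : V →ₗ[k] V) (g : G) : V →ₗ[k] V := ρ g ∘ₗ π ∘ₗ ρ g⁻¹

lemma conjProj_coset {π : V →ₗ[k] V} (hπ : ∀ n ∈ N, ∀ v, ρ n (π v) = π (ρ n v))
    {g₁ g₂ : G} (h : g₁⁻¹ * g₂ ∈ N) : conjProj ρ π g₁ = conjProj ρ π g₂ := by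
  set n := g₁⁻¹ * g₂ with hn
  have hg₂ : g₂ = g₁ * n := by rw [hn]; group
  ext v
  have e1 : ρ (g₁ * n)⁻¹ v = ρ n⁻¹ (ρ g₁⁻¹ v) := by
    rw [← Module.End.mul_apply, ← map_mul, mul_inv_rev]
  simp only [conjProj, LinearMap.comp_apply, hg₂, map_mul, Module.End.mul_apply]
  rw [e1, hπ n h, rep_inv_cancel]

lemma conjProj_mul (π : V →ₗ[k] V) (h g : G) (v : V) :
    ρ h (conjProj ρ π g (ρ h⁻¹ v)) = conjProj ρ π (h * g) v := by
  simp only [conjProj, LinearMap.comp_apply, map_mul, mul_inv_rev, Module.End.mul_apply]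

lemma conjProj_mk_eq {π : V →ₗ[k] V} (hπ : ∀ n ∈ N, ∀ v, ρ n (π v) = π (ρ n v))
    {g₁ g₂ : G} (h : (g₁ : G ⧸ N) = (g₂ : G ⧸ N)) : conjProj ρ π g₁ = conjProj ρ π g₂ :=
  conjProj_coset ρ hπ (QuotientGroup.eq.mp h)

lemma direction1 [FiniteDimensional k V] (N : Subgroup G)
    (hfi : N.FiniteIndex) (hchar : CharZero k)
    (hss : IsSemisimpleRep (ρ.comp N.subtype)) : IsSemisimpleRep ρ := by
  classical
  intro W hW
  have hWN : IsSubrep (ρ.comp N.subtype) W := fun n v hv => hW n v hv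
  obtain ⟨W', hW'N, hcompl⟩ := hss W hWN
  set π : V →ₗ[k] V := W.subtype ∘ₗ (W.projectionOnto W' hcompl) with hπdef
  have hπmem : ∀ v, π v ∈ W := fun v => SetLike.coe_mem _
  have hπW : ∀ w ∈ W, π w = w := by
    intro w hw
    simpa [hπdef] using congrArg (W.subtype) (Submodule.projectionOnto_apply_left hcompl ⟨w, hw⟩)
  have hπW' : ∀ w ∈ W', π w = 0 := by
    intro w hw
    simp [hπdef, Submodule.projectionOnto_apply_of_mem_right hcompl hw]
  have hcomm : ∀ n ∈ N, ∀ v, ρ n (π v) = π (ρ n v) := by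
    intro n hn v
    have hdec := Submodule.projection_add_projection_eq_self hcompl v
    set a : V := (W.projectionOnto W' hcompl v : V) with ha
    set b : V := (W'.projectionOnto W hcompl.symm v : V) with hb
    have haW : a ∈ W := SetLike.coe_mem _
    have hbW' : b ∈ W' := SetLike.coe_mem _
    have hv : v = a + b := hdec.symm
    have hπv : π v = a := by rw [hv, map_add, hπW a haW, hπW' b hbW', add_zero]
    have hna : ρ n a ∈ W := hWN ⟨n, hn⟩ a haW
    have hnb : ρ n b ∈ W' := hW'N ⟨n, hn⟩ b hbW'
    rw [hπv, hv, map_add, map_add, hπW _ hna, hπW' _ hnb, add_zero]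
  haveI := hfi
  haveI : Finite (G ⧸ N) := Subgroup.finite_quotient_of_finiteIndex
  haveI : Fintype (G ⧸ N) := Fintype.ofFinite _
  set T : V →ₗ[k] V := ∑ x : G ⧸ N, conjProj ρ π x.out with hT
  have hTapp : ∀ v, T v = ∑ x : G ⧸ N, conjProj ρ π x.out v := fun v => by
    rw [hT]; exact LinearMap.sum_apply _ _ _
  -- T is G-equivariant
  have hTequi : ∀ h : G, ∀ v, T (ρ h v) = ρ h (T v) := by
    intro h v
    rw [hTapp, hTapp, map_sum]
    refine (Fintype.sum_equiv (MulAction.toPerm h) _ _ fun x => ?_).symm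
    have e1 : ρ h (conjProj ρ π x.out (ρ h⁻¹ (ρ h v))) = conjProj ρ π (h * x.out) (ρ h v) :=
      conjProj_mul ρ π h x.out (ρ h v)
    have e2 : ρ h⁻¹ (ρ h v) = v := by
      have := rep_inv_cancel ρ h⁻¹ v; rwa [inv_inv] at this
    rw [e2] at e1
    rw [e1]
    refine congrFun (congrArg _ (conjProj_mk_eq ρ hcomm ?_)) _
    show QuotientGroup.mk (h * x.out) = QuotientGroup.mk ((MulAction.toPerm h x).out)
    have h1 : (MulAction.toPerm h x) = h • x := rfl
    rw [h1, QuotientGroup.out_eq']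
    show QuotientGroup.mk (h • x.out) = h • x
    exact MulAction.Quotient.mk_smul_out N h x
  have hTmem : ∀ v, T v ∈ W := by
    intro v
    rw [hTapp]
    refine Submodule.sum_mem _ fun x _ => ?_
    exact hW x.out _ (hπmem _)
  have hTid : ∀ w ∈ W, T w = (Fintype.card (G ⧸ N)) • w := by
    intro w hw
    rw [hTapp]
    rw [Finset.sum_congr rfl fun x _ => ?_, Finset.sum_const, Finset.card_univ]
    show conjProj ρ π x.out w = w
    rw [conjProj]
    simp only [LinearMap.comp_apply]
    rw [hπW _ (hW _ _ hw), rep_inv_cancel]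
  -- the averaged projection
  have hindex : ((N.index : k)) ≠ 0 := Nat.cast_ne_zero.mpr hfi.index_ne_zero
  set P : V →ₗ[k] V := ((N.index : k))⁻¹ • T with hP
  have hPapp : ∀ v, P v = ((N.index : k))⁻¹ • T v := fun v => rfl
  have hPmem : ∀ v, P v ∈ W := fun v => Submodule.smul_mem _ _ (hTmem v)
  have hPid : ∀ w ∈ W, P w = w := by
    intro w hw
    rw [hPapp, hTid w hw, ← Nat.cast_smul_eq_nsmul k, smul_smul]
    have : N.index = Fintype.card (G ⧸ N) := by
      rw [Subgroup.index, Nat.card_eq_fintype_card]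
    rw [← this, inv_mul_cancel₀ hindex, one_smul]
  have hPequi : ∀ h : G, ∀ v, P (ρ h v) = ρ h (P v) := by
    intro h v
    rw [hPapp, hPapp, hTequi h v, map_smul]
  refine ⟨LinearMap.ker P, ?_, ?_⟩
  · intro g v hv
    rw [LinearMap.mem_ker] at hv ⊢
    rw [hPequi g v, hv, map_zero]
  · constructor
    · rw [disjoint_iff]
      ext x
      simp only [Submodule.mem_inf, Submodule.mem_bot, LinearMap.mem_ker]
      constructor
      · rintro ⟨hxW, hxK⟩
        rw [← hPid x hxW, hxK]
      · rintro rfl; simp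
    · rw [codisjoint_iff, eq_top_iff]
      intro v _
      rw [Submodule.mem_sup]
      refine ⟨P v, hPmem v, v - P v, ?_, by abel⟩
      rw [LinearMap.mem_ker, map_sub, hPid _ (hPmem v), sub_self]
end Avg

section Clifford
variable {H : Type*} [Group H]

lemma isSubrep_bot (σ : Representation k H V) : IsSubrep σ (⊥ : Submodule k V) := by
  intro g v hv
  rw [Submodule.mem_bot] at hv ⊢
  rw [hv, map_zero]

lemma isSubrep_inf {σ : Representation k H V} {A B : Submodule k V}
    (hA : IsSubrep σ A) (hB : IsSubrep σ B) : IsSubrep σ (A ⊓ B) :=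
  fun g v hv => ⟨hA g v hv.1, hB g v hv.2⟩

lemma isSubrep_sup {σ : Representation k H V} {A B : Submodule k V}
    (hA : IsSubrep σ A) (hB : IsSubrep σ B) : IsSubrep σ (A ⊔ B) := by
  intro g v hv
  obtain ⟨a, ha, b, hb, rfl⟩ := Submodule.mem_sup.mp hv
  rw [map_add]
  exact Submodule.add_mem_sup (hA g a ha) (hB g b hb)

/-- minimal nonzero subrepresentation -/
def MinSubrep (σ : Representation k H V) (U : Submodule k V) : Prop :=
  IsSubrep σ U ∧ U ≠ ⊥ ∧ ∀ U' : Submodule k V, IsSubrep σ U' → U' ≤ U → U' ≠ ⊥ → U' = U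

lemma exists_minSubrep [FiniteDimensional k V] (σ : Representation k H V)
    (W : Submodule k V) (hW : IsSubrep σ W) (hne : W ≠ ⊥) :
    ∃ U : Submodule k V, U ≤ W ∧ MinSubrep σ U := by
  classical
  set s : Set ℕ :=
    {d | ∃ U : Submodule k V, U ≤ W ∧ IsSubrep σ U ∧ U ≠ ⊥ ∧ Module.finrank k U = d} with hs
  have hsne : s.Nonempty := ⟨_, W, le_refl W, hW, hne, rfl⟩
  obtain ⟨U, hUW, hU, hUne, hUd⟩ := Nat.sInf_mem hsne
  refine ⟨U, hUW, hU, hUne, fun U' hU's hle hne' => ?_⟩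
  by_contra hne2
  have hlt : U' < U := lt_of_le_of_ne hle hne2
  have h1 : Module.finrank k U' < Module.finrank k U := Submodule.finrank_lt_finrank_of_lt hlt
  have hmem : Module.finrank k U' ∈ s := ⟨U', le_trans hle hUW, hU's, hne', rfl⟩
  have h2 := Nat.sInf_le hmem
  omega
end Clifford

section Clifford2
variable (ρ : Representation k G V) {N : Subgroup G}

lemma map_map_inv (g : G) (W : Submodule k V) : (W.map (ρ g)).map (ρ g⁻¹) = W := by
  rw [← Submodule.map_comp]
  have h : (ρ g⁻¹) ∘ₗ (ρ g) = LinearMap.id := by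
    have := rep_comp_inv ρ g⁻¹
    rwa [inv_inv] at this
  rw [h, Submodule.map_id]

lemma map_ne_bot {g : G} {W : Submodule k V} (h : W ≠ ⊥) : W.map (ρ g) ≠ ⊥ := by
  intro hb
  apply h
  have := congrArg (Submodule.map (ρ g⁻¹)) hb
  rwa [map_map_inv, Submodule.map_bot] at this

lemma isSubrep_map (hN : N.Normal) {W : Submodule k V}
    (hW : IsSubrep (ρ.comp N.subtype) W) (g : G) :
    IsSubrep (ρ.comp N.subtype) (W.map (ρ g)) := by
  rintro n v hv
  obtain ⟨w, hw, rfl⟩ := hv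
  have hmem : (g⁻¹ * (n : G) * g) ∈ N := by
    have := hN.conj_mem (n : G) n.2 g⁻¹
    simpa using this
  have key : ρ (n : G) (ρ g w) = ρ g (ρ (g⁻¹ * (n : G) * g) w) := by
    rw [← Module.End.mul_apply, ← Module.End.mul_apply, ← map_mul, ← map_mul]
    congr 1
    group
  show ρ (n : G) (ρ g w) ∈ W.map (ρ g)
  rw [key]
  exact ⟨_, hW ⟨_, hmem⟩ w hw, rfl⟩

lemma minSubrep_map (hN : N.Normal) {U : Submodule k V}
    (hU : MinSubrep (ρ.comp N.subtype) U) (g : G) :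
    MinSubrep (ρ.comp N.subtype) (U.map (ρ g)) := by
  obtain ⟨hsub, hne, hmin⟩ := hU
  refine ⟨isSubrep_map ρ hN hsub g, map_ne_bot ρ hne, ?_⟩
  intro U' hU's hle hne'
  have hle2 : U'.map (ρ g⁻¹) ≤ U := by
    have := Submodule.map_mono (f := ρ g⁻¹) hle
    rwa [map_map_inv] at this
  have := hmin (U'.map (ρ g⁻¹)) (isSubrep_map ρ hN hU's g⁻¹) hle2 (map_ne_bot ρ hne')
  have h2 := congrArg (Submodule.map (ρ g)) this
  have h3 : (U'.map (ρ g⁻¹)).map (ρ g) = U' := by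
    have := map_map_inv ρ g⁻¹ U'
    rwa [inv_inv] at this
  rwa [h3] at h2

lemma direction2 [FiniteDimensional k V] (hN : N.Normal)
    (hss : IsSemisimpleRep ρ) : IsSemisimpleRep (ρ.comp N.subtype) := by
  classical
  set σ := ρ.comp N.subtype with hσ
  set S : Set (Submodule k V) := {U | MinSubrep σ U} with hS
  set Soc : Submodule k V := sSup S with hSoc
  -- Soc is stable under all of G
  have hstab : ∀ g : G, Soc.map (ρ g) ≤ Soc := by
    intro g
    rw [hSoc, sSup_eq_iSup', Submodule.map_iSup]
    refine iSup_le fun U => ?_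
    have hm : Submodule.map (ρ g) (U : Submodule k V) ∈ S := minSubrep_map ρ hN U.2 g
    calc Submodule.map (ρ g) (U : Submodule k V) ≤ sSup S := le_sSup hm
      _ = ⨆ a : S, (a : Submodule k V) := sSup_eq_iSup' S

  have hGsub : IsSubrep ρ Soc := fun g v hv => hstab g ⟨v, hv, rfl⟩
  have hNsub : IsSubrep σ Soc := fun n v hv => hGsub (n : G) v hv
  -- Soc = ⊤ by G-semisimplicity
  have hSoctop : Soc = ⊤ := by
    obtain ⟨C, hCsub, hCompl⟩ := hss Soc hGsub
    by_cases hC : C = ⊥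
    · have := hCompl.codisjoint
      rw [codisjoint_iff, hC, sup_bot_eq] at this
      exact this
    · exfalso
      obtain ⟨U, hUC, hUmin⟩ := exists_minSubrep σ C (fun n v hv => hCsub (n : G) v hv) hC
      have hUSoc : U ≤ Soc := le_sSup hUmin
      have : U ≤ Soc ⊓ C := le_inf hUSoc hUC
      rw [disjoint_iff.mp hCompl.disjoint] at this
      exact hUmin.2.1 (le_bot_iff.mp this)
  -- every N-subrep has a complement
  intro W hW
  set s : Set ℕ := {d | ∃ C : Submodule k V, IsSubrep σ C ∧ W ⊓ C = ⊥ ∧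
    Module.finrank k C = d} with hs
  have hsne : s.Nonempty := ⟨0, ⊥, isSubrep_bot σ, inf_bot_eq W, finrank_bot k V⟩
  have hbdd : BddAbove s := by
    refine ⟨Module.finrank k V, fun d hd => ?_⟩
    obtain ⟨C, _, _, rfl⟩ := hd
    exact Submodule.finrank_le C
  obtain ⟨C, hCsub, hWC, hCd⟩ := Nat.sSup_mem hsne hbdd
  refine ⟨C, hCsub, ?_⟩
  rw [isCompl_iff]
  refine ⟨disjoint_iff.mpr hWC, ?_⟩
  rw [codisjoint_iff]
  by_contra hne
  have hex : ∃ U ∈ S, ¬ U ≤ W ⊔ C := by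
    by_contra hall
    push_neg at hall
    apply hne
    have : Soc ≤ W ⊔ C := sSup_le hall
    rw [hSoctop] at this
    exact le_antisymm le_top this
  obtain ⟨U, hU, hUnle⟩ := hex
  have h1 : U ⊓ (W ⊔ C) = ⊥ := by
    by_contra h
    have := hU.2.2 (U ⊓ (W ⊔ C)) (isSubrep_inf hU.1 (isSubrep_sup hW hCsub)) inf_le_left h
    exact hUnle (this ▸ inf_le_right)
  have h2 : W ⊓ (C ⊔ U) = ⊥ := by
    rw [eq_bot_iff]
    rintro x ⟨hxW, hxCU⟩
    obtain ⟨c, hc, u, hu, hcu⟩ := Submodule.mem_sup.mp hxCU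
    have hu2 : u ∈ U ⊓ (W ⊔ C) := by
      refine ⟨hu, ?_⟩
      have : u = x - c := by rw [← hcu]; abel
      rw [this]
      exact Submodule.sub_mem _ (Submodule.mem_sup_left hxW) (Submodule.mem_sup_right hc)
    rw [h1, Submodule.mem_bot] at hu2
    rw [hu2, add_zero] at hcu
    have : x ∈ W ⊓ C := ⟨hxW, hcu ▸ hc⟩
    rw [hWC, Submodule.mem_bot] at this
    simp [this]
  have hlt : C < C ⊔ U := by
    refine lt_of_le_of_ne le_sup_left fun h => ?_
    have hUC : U ≤ C := h ▸ le_sup_right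
    have : U ≤ U ⊓ (W ⊔ C) := le_inf (le_refl U) (le_trans hUC le_sup_right)
    rw [h1] at this
    exact hU.2.1 (le_bot_iff.mp this)
  have hrk : Module.finrank k C < Module.finrank k (C ⊔ U : Submodule k V) :=
    Submodule.finrank_lt_finrank_of_lt hlt
  have hmem : Module.finrank k (C ⊔ U : Submodule k V) ∈ s :=
    ⟨C ⊔ U, isSubrep_sup hCsub hU.1, h2, rfl⟩
  have := le_csSup hbdd hmem
  omega
end Clifford2

end Helpers

/-- For a finite-dimensional representation `V` of `G` over a field `k`: if `char k = 0`
and the restriction of `V` to a finite-index subgroup `N ≤ G` is semisimple then `V` is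
semisimple; conversely (Clifford's theorem direction), if `V` is semisimple then its
restriction to any finite-index normal subgroup `N` is semisimple. -/
theorem semisimple_iff_restriction_finiteIndex {k G V : Type*} [Field k]
    [Group G] [AddCommGroup V] [Module k V] [FiniteDimensional k V]
    (ρ : Representation k G V) :
    (∀ N : Subgroup G, N.FiniteIndex → CharZero k →
      IsSemisimpleRep (ρ.comp N.subtype) → IsSemisimpleRep ρ) ∧
    (∀ N : Subgroup G, N.FiniteIndex → N.Normal →
      IsSemisimpleRep ρ → IsSemisimpleRep (ρ.comp N.subtype)) := by
  constructor
  · intro N hfi hchar hss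
    exact direction1 ρ N hfi hchar hss
  · intro N hfi hN hss
    exact direction2 ρ hN hss
end
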